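/- Let C = F[U,V] ⊕ A be a chain complex over R = F[U,V] (F = Z/2Z), where F[U,V] is a summand with zero differential and A is a direct sum of n ≥ 1 unit boxes. Then H_*(C/(V=0)) ≅ F[U] ⊕ (F[U]/U)^{2n} as F[U]-modules, and consequently Ord_U(H_*(C/(V=0))) = 1. -/

import Mathlib

/- STATEMENT 10: Let `C = F[U,V] ⊕ A` over `R = F[U,V]` (`F = ℤ/2ℤ`), where the `F[U,V]`
summand has zero differential and `A` is a direct sum of `n ≥ 1` unit boxes.  Then
`H_*(C/(V=0)) ≅ F[U] ⊕ (F[U]/U)^{2n}` as `F[U]`-modules — as modules over `R` acting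
through `V = 0`, this reads `R/(V) ⊕ (R/(U,V))^{2n}` — and consequently
`Ord_U(H_*(C/(V=0))) = 1`. -/

noncomputable abbrev R2 : Type := MvPolynomial (Fin 2) (ZMod 2)
noncomputable abbrev UU : R2 := MvPolynomial.X 0
noncomputable abbrev VV : R2 := MvPolynomial.X 1

/-- The underlying module of `C = R ⊕ (n unit boxes)`. -/
noncomputable abbrev Cmod (n : ℕ) : Type := R2 × ((Fin n × Fin 4) → R2)

/-- The generator of the free summand `R`. -/
noncomputable def ef {n : ℕ} : Cmod n := ((1 : R2), 0)

/-- The `i`-th generator (`a, b, c, d` for `i = 0, 1, 2, 3`) of the `k`-th unit box. -/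
noncomputable def eb {n : ℕ} (k : Fin n) (i : Fin 4) : Cmod n := (0, Pi.single (k, i) 1)

/-- The submodule `V·C`. -/
noncomputable def VC (C : Type*) [AddCommGroup C] [Module R2 C] : Submodule R2 C :=
  LinearMap.range (LinearMap.lsmul R2 C VV)

lemma VC_le_comap {C : Type*} [AddCommGroup C] [Module R2 C] (D : C →ₗ[R2] C) :
    VC C ≤ (VC C).comap D := by
  rintro _ ⟨m, rfl⟩
  exact ⟨D m, by simp [map_smul]⟩

/-- The induced differential on the quotient complex `C/(V=0) = C/(V·C)`. -/
noncomputable def Dbar {C : Type*} [AddCommGroup C] [Module R2 C] (D : C →ₗ[R2] C) :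
    (C ⧸ VC C) →ₗ[R2] (C ⧸ VC C) :=
  Submodule.mapQ (VC C) (VC C) D (VC_le_comap D)

/-- Homology of a module with an endomorphism `d`. -/
noncomputable def Hml {R M : Type*} [CommRing R] [AddCommGroup M] [Module R M]
    (d : M →ₗ[R] M) : Type _ :=
  LinearMap.ker d ⧸ (LinearMap.range d).comap (LinearMap.ker d).subtype

noncomputable instance {R M : Type*} [CommRing R] [AddCommGroup M] [Module R M]
    (d : M →ₗ[R] M) : AddCommGroup (Hml d) :=
  inferInstanceAs (AddCommGroup
    (LinearMap.ker d ⧸ (LinearMap.range d).comap (LinearMap.ker d).subtype))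

noncomputable instance {R M : Type*} [CommRing R] [AddCommGroup M] [Module R M]
    (d : M →ₗ[R] M) : Module R (Hml d) :=
  inferInstanceAs (Module R
    (LinearMap.ker d ⧸ (LinearMap.range d).comap (LinearMap.ker d).subtype))

/-- The `U`-torsion order of an `R = F[U,V]`-module, valued in `ℕ∞`. -/
noncomputable def OrdU (M : Type*) [AddCommGroup M] [Module R2 M] : ℕ∞ :=
  sInf ((fun k : ℕ => (k : ℕ∞)) ''
    {k : ℕ | ∀ m : M, (∃ j : ℕ, UU ^ j • m = 0) → UU ^ k • m = 0})

/-! ### Auxiliary material for the proof -/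

lemma Uprime : Prime UU := by
  rw [← MulEquiv.prime_iff (MvPolynomial.finSuccEquiv (ZMod 2) 1).toMulEquiv]
  have h : (MvPolynomial.finSuccEquiv (ZMod 2) 1).toMulEquiv (MvPolynomial.X 0) = Polynomial.X :=
    MvPolynomial.finSuccEquiv_X_zero
  rw [h]
  exact Polynomial.prime_X

lemma Vprime : Prime VV := by
  have h := (MulEquiv.prime_iff (MvPolynomial.renameEquiv (ZMod 2)
    (Equiv.swap (0 : Fin 2) 1)).toMulEquiv (p := UU)).mpr Uprime
  simpa using h

lemma V_not_dvd_U : ¬ VV ∣ UU := by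
  intro ⟨q, hq⟩
  have := congrArg (MvPolynomial.eval (fun i : Fin 2 => if i = 0 then (1 : ZMod 2) else 0)) hq
  simp at this

lemma V_dvd_of_dvd_mul {j : ℕ} {q : R2} (h : VV ∣ UU ^ j * q) : VV ∣ q := by
  rcases Vprime.dvd_mul.mp h with h' | h'
  · exact absurd (Vprime.dvd_of_dvd_pow h') V_not_dvd_U
  · exact h'

lemma one_not_mem_I2 : (1 : R2) ∉ Ideal.span {UU, VV} := by
  intro h
  obtain ⟨a, b, hab⟩ := Ideal.mem_span_pair.mp h
  have := congrArg (MvPolynomial.eval (fun _ : Fin 2 => (0 : ZMod 2))) hab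
  simp [smul_eq_mul] at this

noncomputable def dfun (n : ℕ) (f : (Fin n × Fin 4) → R2) : (Fin n × Fin 4) → R2 :=
  fun ki => if ki.2 = 1 then UU * f (ki.1, 0)
    else if ki.2 = 2 then VV * f (ki.1, 0)
    else if ki.2 = 3 then VV * f (ki.1, 1) + UU * f (ki.1, 2)
    else 0

noncomputable def Dstd (n : ℕ) : Cmod n →ₗ[R2] Cmod n where
  toFun x := (0, dfun n x.2)
  map_add' x y := by
    refine Prod.ext (by simp) ?_
    funext ki
    simp only [dfun, Prod.snd_add, Pi.add_apply]
    split_ifs <;> ring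
  map_smul' c x := by
    refine Prod.ext (by simp) ?_
    funext ki
    simp only [dfun, Prod.smul_snd, Pi.smul_apply, smul_eq_mul, RingHom.id_apply]
    split_ifs <;> ring

lemma mem_VC_iff {n : ℕ} (x : Cmod n) :
    x ∈ VC (Cmod n) ↔ VV ∣ x.1 ∧ ∀ ki, VV ∣ x.2 ki := by
  constructor
  · rintro ⟨m, rfl⟩
    exact ⟨⟨m.1, rfl⟩, fun ki => ⟨m.2 ki, rfl⟩⟩
  · rintro ⟨⟨p, hp⟩, hf⟩
    choose g hg using hf
    exact ⟨(p, g), Prod.ext hp.symm (funext fun ki => (hg ki).symm)⟩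

lemma D_eq_Dstd {n : ℕ} (D : Cmod n →ₗ[R2] Cmod n)
    (hf : D ef = 0)
    (ha : ∀ k : Fin n, D (eb k 0) = UU • eb k 1 + VV • eb k 2)
    (hb : ∀ k : Fin n, D (eb k 1) = VV • eb k 3)
    (hc : ∀ k : Fin n, D (eb k 2) = UU • eb k 3)
    (hd : ∀ k : Fin n, D (eb k 3) = 0) : D = Dstd n := by
  apply LinearMap.prod_ext
  · apply LinearMap.ext_ring
    have h1 : ((1 : R2), (0 : (Fin n × Fin 4) → R2)) = ef := rfl
    simp only [LinearMap.comp_apply, LinearMap.inl_apply, h1, hf]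
    refine Prod.ext (by simp [Dstd]) ?_
    show (0 : Cmod n).2 = dfun n (0 : (Fin n × Fin 4) → R2)
    funext ki
    simp [dfun]
  · apply LinearMap.pi_ext'
    intro ki
    apply LinearMap.ext_ring
    obtain ⟨k, i⟩ := ki
    have heb : ((0 : R2), Pi.single (k, i) (1 : R2)) = eb k i := rfl
    simp only [LinearMap.comp_apply, LinearMap.inr_apply, LinearMap.single_apply]
    rw [heb]
    fin_cases i
    · change D (eb k 0) = Dstd n (eb k 0)
      rw [ha k]
      refine Prod.ext (by simp [Dstd, eb]) ?_
      show (UU • eb k 1 + VV • eb k 2).2 = dfun n (eb k 0).2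
      funext ⟨k', i'⟩
      simp only [eb, dfun, Prod.snd_add, Prod.smul_snd, Pi.add_apply, Pi.smul_apply,
        smul_eq_mul]
      fin_cases i' <;>
        simp [Pi.single_apply, Prod.ext_iff] <;> split_ifs <;> simp_all
    · change D (eb k 1) = Dstd n (eb k 1)
      rw [hb k]
      refine Prod.ext (by simp [Dstd, eb]) ?_
      show (VV • eb k 3).2 = dfun n (eb k 1).2
      funext ⟨k', i'⟩
      simp only [eb, dfun, Prod.smul_snd, Pi.smul_apply, smul_eq_mul]
      fin_cases i' <;>
        simp [Pi.single_apply, Prod.ext_iff] <;> split_ifs <;> simp_all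
    · change D (eb k 2) = Dstd n (eb k 2)
      rw [hc k]
      refine Prod.ext (by simp [Dstd, eb]) ?_
      show (UU • eb k 3).2 = dfun n (eb k 2).2
      funext ⟨k', i'⟩
      simp only [eb, dfun, Prod.smul_snd, Pi.smul_apply, smul_eq_mul]
      fin_cases i' <;>
        simp [Pi.single_apply, Prod.ext_iff] <;> split_ifs <;> simp_all
    · change D (eb k 3) = Dstd n (eb k 3)
      rw [hd k]
      refine Prod.ext (by simp [Dstd, eb]) ?_
      show (0 : Cmod n).2 = dfun n (eb k 3).2
      funext ⟨k', i'⟩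
      simp only [eb, dfun]
      fin_cases i' <;>
        simp [Pi.single_apply, Prod.ext_iff] <;> split_ifs <;> simp_all

noncomputable abbrev Tgt (n : ℕ) : Type :=
  (R2 ⧸ Ideal.span {VV}) × (Fin (2 * n) → R2 ⧸ Ideal.span {UU, VV})

noncomputable def idx {n : ℕ} (j : Fin (2 * n)) : Fin n × Fin 4 :=
  ((finProdFinEquiv.symm j).2, if (finProdFinEquiv.symm j).1 = 0 then 1 else 3)

lemma idx_snd {n : ℕ} (j : Fin (2 * n)) : (idx j).2 = 1 ∨ (idx j).2 = 3 := by
  unfold idx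
  split_ifs <;> simp

noncomputable def Phi (n : ℕ) : Cmod n →ₗ[R2] Tgt n :=
  LinearMap.prod
    ((Ideal.span {VV}).mkQ.comp (LinearMap.fst R2 R2 _))
    ((LinearMap.pi fun j => (Ideal.span {UU, VV}).mkQ.comp (LinearMap.proj (idx j))).comp
      (LinearMap.snd R2 R2 _))

lemma Phi_apply {n : ℕ} (x : Cmod n) :
    Phi n x = ((Ideal.span {VV}).mkQ x.1, fun j => (Ideal.span {UU, VV}).mkQ (x.2 (idx j))) :=
  rfl

lemma smul_mkQ_I1 (y : R2) : VV • (Ideal.span {VV}).mkQ y = 0 := by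
  rw [← map_smul, Submodule.mkQ_apply, Submodule.Quotient.mk_eq_zero]
  exact Ideal.mem_span_singleton.mpr (Dvd.intro y rfl)

lemma U_smul_mkQ_I2 (y : R2) : UU • (Ideal.span {UU, VV}).mkQ y = 0 := by
  rw [← map_smul, Submodule.mkQ_apply, Submodule.Quotient.mk_eq_zero]
  exact Ideal.mem_span_pair.mpr ⟨y, 0, by rw [smul_eq_mul]; ring⟩

lemma V_smul_mkQ_I2 (y : R2) : VV • (Ideal.span {UU, VV}).mkQ y = 0 := by
  rw [← map_smul, Submodule.mkQ_apply, Submodule.Quotient.mk_eq_zero]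
  exact Ideal.mem_span_pair.mpr ⟨0, y, by rw [smul_eq_mul]; ring⟩

lemma Phi_vanish {n : ℕ} : VC (Cmod n) ≤ LinearMap.ker (Phi n) := by
  rintro _ ⟨m, rfl⟩
  have h : (LinearMap.lsmul R2 (Cmod n) VV) m = VV • m := rfl
  rw [LinearMap.mem_ker, h, map_smul]
  refine Prod.ext ?_ ?_
  · show VV • (Phi n m).1 = (0 : R2 ⧸ Ideal.span {VV})
    rw [Phi_apply]
    exact smul_mkQ_I1 m.1
  · show VV • (Phi n m).2 = 0
    rw [Phi_apply]
    funext j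
    exact V_smul_mkQ_I2 (m.2 (idx j))

noncomputable def Phibar (n : ℕ) : (Cmod n ⧸ VC (Cmod n)) →ₗ[R2] Tgt n :=
  Submodule.liftQ _ (Phi n) Phi_vanish

lemma Phibar_mk {n : ℕ} (x : Cmod n) :
    Phibar n (Submodule.Quotient.mk x) = Phi n x := rfl

lemma Dbar_mk {n : ℕ} (D : Cmod n →ₗ[R2] Cmod n) (x : Cmod n) :
    Dbar D (Submodule.Quotient.mk x) = Submodule.Quotient.mk (D x) := by
  simp [Dbar, Submodule.mapQ_apply]

lemma dfun_mem {n : ℕ} (f : (Fin n × Fin 4) → R2) (ki : Fin n × Fin 4)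
    (h : ki.2 = 1 ∨ ki.2 = 3) : dfun n f ki ∈ Ideal.span {UU, VV} := by
  rcases h with h | h <;> obtain ⟨k, i⟩ := ki <;> simp only at h <;> subst h
  · have h1 : dfun n f (k, 1) = UU * f (k, 0) := by simp [dfun]
    rw [h1]
    exact Ideal.mem_span_pair.mpr ⟨f (k, 0), 0, by ring⟩
  · have h3 : dfun n f (k, 3) = VV * f (k, 1) + UU * f (k, 2) := by simp [dfun]
    rw [h3]
    exact Ideal.mem_span_pair.mpr ⟨f (k, 2), f (k, 1), by ring⟩

lemma hcond (n : ℕ) :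
    (LinearMap.range (Dbar (Dstd n))).comap (LinearMap.ker (Dbar (Dstd n))).subtype ≤
      LinearMap.ker ((Phibar n).comp (LinearMap.ker (Dbar (Dstd n))).subtype) := by
  rintro ⟨y, hy⟩ hmem
  simp only [Submodule.mem_comap, Submodule.coe_subtype, LinearMap.mem_range] at hmem
  obtain ⟨zbar, hz⟩ := hmem
  obtain ⟨z, rfl⟩ := Submodule.Quotient.mk_surjective _ zbar
  rw [LinearMap.mem_ker, LinearMap.comp_apply]
  simp only [Submodule.coe_subtype]
  rw [← hz, Dbar_mk, Phibar_mk, Phi_apply]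
  refine Prod.ext ?_ ?_
  · show (Ideal.span {VV}).mkQ (Dstd n z).1 = 0
    have h0 : (Dstd n z).1 = 0 := rfl
    rw [h0, map_zero]
  · show (fun j => (Ideal.span {UU, VV}).mkQ ((Dstd n z).2 (idx j))) = 0
    funext j
    have h2 : (Dstd n z).2 = dfun n z.2 := rfl
    rw [h2]
    show _ = (0 : R2 ⧸ Ideal.span {UU, VV})
    rw [Submodule.mkQ_apply, Submodule.Quotient.mk_eq_zero]
    exact dfun_mem z.2 (idx j) (idx_snd j)

noncomputable def hmap (n : ℕ) : Hml (Dbar (Dstd n)) →ₗ[R2] Tgt n :=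
  Submodule.liftQ _ ((Phibar n).comp (LinearMap.ker (Dbar (Dstd n))).subtype) (hcond n)
lemma hmap_surjective (n : ℕ) : Function.Surjective (hmap n) := by
  rintro ⟨a, q⟩
  obtain ⟨p, rfl⟩ := Submodule.Quotient.mk_surjective _ a
  choose g hg using fun j => Submodule.Quotient.mk_surjective (Ideal.span {UU, VV}) (q j)
  set f : (Fin n × Fin 4) → R2 := fun ki =>
    if ki.2 = 1 then g (finProdFinEquiv (0, ki.1))
    else if ki.2 = 3 then g (finProdFinEquiv (1, ki.1)) else 0 with hf
  have hker : Submodule.Quotient.mk (p, f) ∈ LinearMap.ker (Dbar (Dstd n)) := by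
    rw [LinearMap.mem_ker, Dbar_mk, Submodule.Quotient.mk_eq_zero, mem_VC_iff]
    constructor
    · exact dvd_zero _
    · rintro ⟨k, i⟩
      show VV ∣ dfun n f (k, i)
      fin_cases i <;> simp [dfun, hf]
  refine ⟨Submodule.Quotient.mk ⟨Submodule.Quotient.mk (p, f), hker⟩, ?_⟩
  have happ : hmap n (Submodule.Quotient.mk ⟨Submodule.Quotient.mk (p, f), hker⟩) =
      Phi n (p, f) := rfl
  rw [happ, Phi_apply]
  refine Prod.ext rfl ?_
  show (fun j => (Ideal.span {UU, VV}).mkQ (f (idx j))) = q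
  funext j
  obtain ⟨⟨s1, s2⟩, hs⟩ : ∃ s, finProdFinEquiv.symm j = s := ⟨_, rfl⟩
  have hj : finProdFinEquiv (s1, s2) = j := by rw [← hs]; exact Equiv.apply_symm_apply _ j
  show (Ideal.span {UU, VV}).mkQ (f (idx j)) = q j
  fin_cases s1
  · have hidx : idx j = (s2, 1) := by simp [idx, hs]
    rw [hidx]
    have hf1 : f (s2, 1) = g (finProdFinEquiv (0, s2)) := by simp [hf]
    rw [hf1]
    have hj' : finProdFinEquiv ((0 : Fin 2), s2) = j := hj
    rw [hj']
    exact hg j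
  · have hidx : idx j = (s2, 3) := by simp [idx, hs]
    rw [hidx]
    have hf3 : f (s2, 3) = g (finProdFinEquiv (1, s2)) := by simp [hf]
    rw [hf3]
    have hj' : finProdFinEquiv ((1 : Fin 2), s2) = j := hj
    rw [hj']
    exact hg j

lemma hmap_injective (n : ℕ) : Function.Injective (hmap n) := by
  rw [← LinearMap.ker_eq_bot, LinearMap.ker_eq_bot']
  intro m hm
  obtain ⟨⟨xbar, hx⟩, rfl⟩ := Submodule.Quotient.mk_surjective _ m
  obtain ⟨x, rfl⟩ := Submodule.Quotient.mk_surjective _ xbar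
  have hPhi : Phi n x = 0 := hm
  have hPhi1 : (Ideal.span {VV}).mkQ x.1 = 0 := congrArg Prod.fst hPhi
  have hPhi2 : (fun j : Fin (2 * n) => (Ideal.span {UU, VV}).mkQ (x.2 (idx j))) = 0 :=
    congrArg Prod.snd hPhi
  -- memberships from Phi = 0
  have hp : VV ∣ x.1 := by
    rw [Submodule.mkQ_apply, Submodule.Quotient.mk_eq_zero, Ideal.mem_span_singleton] at hPhi1
    exact hPhi1
  have hmem2 : ∀ j : Fin (2 * n), x.2 (idx j) ∈ Ideal.span {UU, VV} := by
    intro j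
    have h : (Ideal.span {UU, VV}).mkQ (x.2 (idx j)) = 0 := congrFun hPhi2 j
    rwa [Submodule.mkQ_apply, Submodule.Quotient.mk_eq_zero] at h
  have hb1 : ∀ k : Fin n, ∃ a b : R2, a * UU + b * VV = x.2 (k, 1) := by
    intro k
    have h := hmem2 (finProdFinEquiv ((0 : Fin 2), k))
    have hidx : idx (n := n) (finProdFinEquiv ((0 : Fin 2), k)) = (k, 1) := by simp [idx]
    rw [hidx] at h
    exact Ideal.mem_span_pair.mp h
  have hb3 : ∀ k : Fin n, ∃ a b : R2, a * UU + b * VV = x.2 (k, 3) := by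
    intro k
    have h := hmem2 (finProdFinEquiv ((1 : Fin 2), k))
    have hidx : idx (n := n) (finProdFinEquiv ((1 : Fin 2), k)) = (k, 3) := by simp [idx]
    rw [hidx] at h
    exact Ideal.mem_span_pair.mp h
  choose β β' hβ using hb1
  choose δ δ' hδ using hb3
  -- divisibilities from ker
  have hker : Dstd n x ∈ VC (Cmod n) := by
    rw [LinearMap.mem_ker, Dbar_mk, Submodule.Quotient.mk_eq_zero] at hx
    exact hx
  rw [mem_VC_iff] at hker
  obtain ⟨-, hkf⟩ := hker
  have h0 : ∀ k : Fin n, VV ∣ x.2 (k, 0) := by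
    intro k
    have h := hkf (k, 1)
    have he : (Dstd n x).2 (k, 1) = UU * x.2 (k, 0) := by simp [Dstd, dfun]
    rw [he, show UU * x.2 (k, 0) = UU ^ 1 * x.2 (k, 0) by ring] at h
    exact V_dvd_of_dvd_mul h
  have h2 : ∀ k : Fin n, VV ∣ x.2 (k, 2) := by
    intro k
    have h := hkf (k, 3)
    have he : (Dstd n x).2 (k, 3) = VV * x.2 (k, 1) + UU * x.2 (k, 2) := by simp [Dstd, dfun]
    rw [he] at h
    have h' : VV ∣ UU * x.2 (k, 2) := (dvd_add_right (Dvd.intro _ rfl)).mp h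
    rw [show UU * x.2 (k, 2) = UU ^ 1 * x.2 (k, 2) by ring] at h'
    exact V_dvd_of_dvd_mul h'
  -- build preimage
  set zf : (Fin n × Fin 4) → R2 := fun ki =>
    if ki.2 = 0 then β ki.1 else if ki.2 = 2 then δ ki.1 else 0 with hzf
  refine (Submodule.Quotient.mk_eq_zero _).mpr ?_
  rw [Submodule.mem_comap]
  show (LinearMap.ker (Dbar (Dstd n))).subtype ⟨Submodule.Quotient.mk x, hx⟩ ∈
    LinearMap.range (Dbar (Dstd n))
  refine ⟨Submodule.Quotient.mk ((0 : R2), zf), ?_⟩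
  rw [Dbar_mk]
  show Submodule.Quotient.mk (Dstd n (0, zf)) = Submodule.Quotient.mk x
  rw [Submodule.Quotient.eq, mem_VC_iff]
  constructor
  · show VV ∣ (Dstd n (0, zf)).1 - x.1
    have : (Dstd n (0, zf)).1 = 0 := rfl
    rw [this]
    exact dvd_sub (dvd_zero _) hp
  · rintro ⟨k, i⟩
    show VV ∣ (Dstd n (0, zf) - x).2 (k, i)
    fin_cases i
    · show VV ∣ dfun n zf (k, 0) - x.2 (k, 0)
      have hd0 : dfun n zf (k, 0) = 0 := by simp [dfun]
      rw [hd0]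
      exact dvd_sub (dvd_zero _) (h0 k)
    · show VV ∣ dfun n zf (k, 1) - x.2 (k, 1)
      have hd1 : dfun n zf (k, 1) = UU * β k := by simp [dfun, hzf]
      rw [hd1, ← hβ k]
      exact ⟨-(β' k), by ring⟩
    · show VV ∣ dfun n zf (k, 2) - x.2 (k, 2)
      obtain ⟨γ, hγ⟩ := h2 k
      have hd2 : dfun n zf (k, 2) = VV * β k := by simp [dfun, hzf]
      rw [hd2, hγ]
      exact ⟨β k - γ, by ring⟩
    · show VV ∣ dfun n zf (k, 3) - x.2 (k, 3)
      have hd3 : dfun n zf (k, 3) = UU * δ k := by simp [dfun, hzf]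
      rw [hd3, ← hδ k]
      exact ⟨-(δ' k), by ring⟩

lemma ordU_congr {M N : Type*} [AddCommGroup M] [Module R2 M] [AddCommGroup N] [Module R2 N]
    (e : M ≃ₗ[R2] N) : OrdU M = OrdU N := by
  unfold OrdU
  have hset : {k : ℕ | ∀ m : M, (∃ j : ℕ, UU ^ j • m = 0) → UU ^ k • m = 0} =
      {k : ℕ | ∀ m : N, (∃ j : ℕ, UU ^ j • m = 0) → UU ^ k • m = 0} := by
    ext k
    simp only [Set.mem_setOf_eq]
    constructor
    · intro h m ⟨j, hj⟩
      have h1 : UU ^ j • e.symm m = 0 := by rw [← map_smul, hj, map_zero]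
      have h2 := h (e.symm m) ⟨j, h1⟩
      have h3 := congrArg e h2
      rwa [map_smul, e.apply_symm_apply, map_zero] at h3
    · intro h m ⟨j, hj⟩
      have h1 : UU ^ j • e m = 0 := by rw [← map_smul, hj, map_zero]
      have h2 := h (e m) ⟨j, h1⟩
      have h3 := congrArg e.symm h2
      rwa [map_smul, e.symm_apply_apply, map_zero] at h3
  rw [hset]

lemma one_mem_ordset (n : ℕ) :
    ∀ m : Tgt n, (∃ j : ℕ, UU ^ j • m = 0) → UU ^ 1 • m = 0 := by
  rintro ⟨a, q⟩ ⟨j, hj⟩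
  obtain ⟨p, rfl⟩ := Submodule.Quotient.mk_surjective _ a
  have hj1 : UU ^ j • (Submodule.Quotient.mk p : R2 ⧸ Ideal.span {VV}) = 0 :=
    congrArg Prod.fst hj
  have hj2 : UU ^ j • q = 0 := congrArg Prod.snd hj
  have ha0 : (Submodule.Quotient.mk p : R2 ⧸ Ideal.span {VV}) = 0 := by
    rw [← Submodule.Quotient.mk_smul] at hj1
    rw [Submodule.Quotient.mk_eq_zero] at hj1 ⊢
    rw [Ideal.mem_span_singleton] at hj1 ⊢
    rw [smul_eq_mul] at hj1
    exact V_dvd_of_dvd_mul hj1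
  refine Prod.ext ?_ ?_
  · show UU ^ 1 • (Submodule.Quotient.mk p : R2 ⧸ Ideal.span {VV}) = 0
    rw [ha0, smul_zero]
  · show UU ^ 1 • q = 0
    funext j'
    obtain ⟨y, hy⟩ := Submodule.Quotient.mk_surjective _ (q j')
    show UU ^ 1 • q j' = 0
    rw [← hy, pow_one, ← Submodule.mkQ_apply]
    exact U_smul_mkQ_I2 y

lemma zero_not_mem_ordset (n : ℕ) (hn : 1 ≤ n) :
    ¬ ∀ m : Tgt n, (∃ j : ℕ, UU ^ j • m = 0) → UU ^ 0 • m = 0 := by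
  intro h
  have h2n : 0 < 2 * n := by omega
  set j0 : Fin (2 * n) := ⟨0, h2n⟩
  set v : R2 ⧸ Ideal.span {UU, VV} := Submodule.Quotient.mk 1 with hv
  set m0 : Tgt n := ((0 : R2 ⧸ Ideal.span {VV}),
    (Pi.single j0 v : Fin (2 * n) → R2 ⧸ Ideal.span {UU, VV})) with hm0
  have hsingle : UU ^ 1 • (Pi.single j0 v : Fin (2 * n) → R2 ⧸ Ideal.span {UU, VV}) = 0 := by
    funext j'
    rw [Pi.smul_apply, Pi.single_apply]
    split_ifs with hj'
    · rw [pow_one, hv, ← Submodule.mkQ_apply]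
      exact U_smul_mkQ_I2 1
    · rw [smul_zero]
      rfl
  have htors : UU ^ 1 • m0 = 0 := by
    rw [hm0, Prod.smul_mk, smul_zero, hsingle]
    rfl
  have h4 := h m0 ⟨1, htors⟩
  rw [pow_zero, one_smul] at h4
  have hv0 : v = 0 := by
    have h5 : (Pi.single j0 v : Fin (2 * n) → R2 ⧸ Ideal.span {UU, VV}) j0 = 0 :=
      congrFun (congrArg Prod.snd h4) j0
    rwa [Pi.single_eq_same] at h5
  rw [hv, Submodule.Quotient.mk_eq_zero] at hv0
  exact one_not_mem_I2 hv0

lemma ordU_Tgt (n : ℕ) (hn : 1 ≤ n) : OrdU (Tgt n) = 1 := by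
  unfold OrdU
  apply le_antisymm
  · exact sInf_le ⟨1, one_mem_ordset n, rfl⟩
  · apply le_sInf
    rintro b ⟨k, hk, rfl⟩
    have hk0 : k ≠ 0 := by
      intro h
      exact zero_not_mem_ordset n hn (h ▸ hk)
    show (1 : ℕ∞) ≤ (k : ℕ∞)
    exact_mod_cast Nat.one_le_iff_ne_zero.mpr hk0
theorem homology_of_free_plus_unit_boxes
    (n : ℕ) (hn : 1 ≤ n)
    (D : Cmod n →ₗ[R2] Cmod n)
    (hf : D ef = 0)
    (ha : ∀ k : Fin n, D (eb k 0) = UU • eb k 1 + VV • eb k 2)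
    (hb : ∀ k : Fin n, D (eb k 1) = VV • eb k 3)
    (hc : ∀ k : Fin n, D (eb k 2) = UU • eb k 3)
    (hd : ∀ k : Fin n, D (eb k 3) = 0) :
    Nonempty (Hml (Dbar D) ≃ₗ[R2]
      (R2 ⧸ Ideal.span {VV}) × (Fin (2 * n) → R2 ⧸ Ideal.span {UU, VV})) ∧
    OrdU (Hml (Dbar D)) = 1 := by
  have hD := D_eq_Dstd D hf ha hb hc hd
  subst hD
  have e : Hml (Dbar (Dstd n)) ≃ₗ[R2] Tgt n :=
    LinearEquiv.ofBijective (hmap n) ⟨hmap_injective n, hmap_surjective n⟩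
  exact ⟨⟨e⟩, by rw [ordU_congr e]; exact ordU_Tgt n hn⟩
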